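/- Assume a₁ < 0, σ > −1 + 2/n (case (iv), so that T₁ = T₀ > 0) and λ ≥ 0. Then for any Y₀, Y₁ ∈ ℝⁿ the Cauchy problem D_t²Y(t) + A(t)Y(t) + λ|Y(t)|^{p−1}Y(t) = 0, Y(0) = Y₀, D_tY(0) = Y₁, has a global solution, i.e., a C¹ solution defined on the whole interval [0,T₀). -/

import Mathlib

open Set

/-- The scale function `a(t)` of the homogeneous and isotropic spacetime. -/
noncomputable def scaleFun (n : ℕ) (σ a₀ a₁ : ℝ) (t : ℝ) : ℝ :=
  if σ = -1 then a₀ * Real.exp (a₁ * t / a₀)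
  else a₀ * (1 + (n : ℝ) * (1 + σ) * a₁ * t / (2 * a₀)) ^ (2 / ((n : ℝ) * (1 + σ)))

/-- `q₀(t) = (d/dt)(a(t)²) / a(t)²`. -/
noncomputable def q0Fun (n : ℕ) (σ a₀ a₁ : ℝ) (t : ℝ) : ℝ :=
  deriv (fun s => (scaleFun n σ a₀ a₁ s) ^ 2) t / (scaleFun n σ a₀ a₁ t) ^ 2

/-- `A(t) = -q₀(t)²/4 - (1/2) (d/dt) q₀(t)`. -/
noncomputable def AFun (n : ℕ) (σ a₀ a₁ : ℝ) (t : ℝ) : ℝ :=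
  -(q0Fun n σ a₀ a₁ t) ^ 2 / 4 - (1 / 2) * deriv (q0Fun n σ a₀ a₁) t

open Metric
open scoped RealInnerProductSpace

set_option maxHeartbeats 2000000
set_option linter.unusedSectionVars false

/-- Scalar MVT inequality: for `0 ≤ y ≤ x`, `q > 0`: `(x^q - y^q) * y ≤ q * x^q * (x-y)`. -/
lemma rpow_sub_rpow_mul_le {q x y : ℝ} (hq : 0 < q) (hy : 0 ≤ y) (hxy : y ≤ x) :
    (x ^ q - y ^ q) * y ≤ q * x ^ q * (x - y) := by
  rcases hy.eq_or_lt with rfl | hy0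
  · have h1 := Real.rpow_nonneg hxy q
    have h2 : (0:ℝ) ≤ q * x ^ q * (x - 0) := by
      apply mul_nonneg (mul_nonneg hq.le h1) (by linarith)
    simpa using h2
  rcases hxy.eq_or_lt with rfl | hlt
  · simp
  have hx0 : 0 < x := hy0.trans hlt
  -- MVT for z ↦ z ^ q on [y, x]
  obtain ⟨c, hc, hceq⟩ := exists_hasDerivAt_eq_slope (fun z => z ^ q)
    (fun z => q * z ^ (q - 1)) hlt
    (by
      apply ContinuousOn.rpow_const continuousOn_id
      intro z hz
      exact Or.inl (lt_of_lt_of_le hy0 hz.1).ne')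
    (fun z hz => Real.hasDerivAt_rpow_const (Or.inl (hy0.trans hz.1).ne'))
  have hc0 : 0 < c := hy0.trans hc.1
  have hxyne : x - y ≠ 0 := sub_ne_zero.2 hlt.ne'
  rw [eq_div_iff hxyne] at hceq
  have hkey : x ^ q - y ^ q = q * c ^ (q - 1) * (x - y) := hceq.symm
  rw [hkey]
  -- `q * c^(q-1) * (x-y) * y ≤ q * x^q * (x-y)` : show `c^(q-1) * y ≤ x^q`
  have h1 : c ^ (q - 1) * y ≤ x ^ q := by
    rcases le_total 1 q with h1q | h1q
    · have : c ^ (q - 1) ≤ x ^ (q - 1) :=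
        Real.rpow_le_rpow hc0.le (hc.2.le) (by linarith)
      calc c ^ (q - 1) * y ≤ x ^ (q - 1) * x := by
            apply mul_le_mul this (hxy) hy (Real.rpow_nonneg hx0.le _)
        _ = x ^ q := by rw [← Real.rpow_add_one hx0.ne']; ring_nf
    · have : c ^ (q - 1) ≤ y ^ (q - 1) := by
        exact Real.rpow_le_rpow_of_nonpos hy0 hc.1.le (by linarith)
      calc c ^ (q - 1) * y ≤ y ^ (q - 1) * y := by
            apply mul_le_mul_of_nonneg_right this hy
        _ = y ^ q := by rw [← Real.rpow_add_one hy0.ne']; ring_nf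
        _ ≤ x ^ q := Real.rpow_le_rpow hy hxy hq.le
  calc q * c ^ (q - 1) * (x - y) * y = q * (c ^ (q - 1) * y) * (x - y) := by ring
    _ ≤ q * x ^ q * (x - y) := by
        apply mul_le_mul_of_nonneg_right _ (by linarith)
        exact mul_le_mul_of_nonneg_left h1 hq.le

variable {E : Type*} [NormedAddCommGroup E] [NormedSpace ℝ E]

lemma norm_rpow_smul_sub_le_aux {q : ℝ} (hq : 0 < q) {a b : E} (hab : ‖b‖ ≤ ‖a‖) :
    ‖(‖a‖ ^ q) • a - (‖b‖ ^ q) • b‖ ≤ (1 + q) * ‖a‖ ^ q * ‖a - b‖ := by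
  have h0a : (0:ℝ) ≤ ‖a‖ := norm_nonneg a
  have h0b : (0:ℝ) ≤ ‖b‖ := norm_nonneg b
  have hdecomp : (‖a‖ ^ q) • a - (‖b‖ ^ q) • b
      = (‖a‖ ^ q) • (a - b) + (‖a‖ ^ q - ‖b‖ ^ q) • b := by
    rw [smul_sub, sub_smul]; abel
  rw [hdecomp]
  calc ‖(‖a‖ ^ q) • (a - b) + (‖a‖ ^ q - ‖b‖ ^ q) • b‖
      ≤ ‖(‖a‖ ^ q) • (a - b)‖ + ‖(‖a‖ ^ q - ‖b‖ ^ q) • b‖ := norm_add_le _ _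
    _ = ‖a‖ ^ q * ‖a - b‖ + |‖a‖ ^ q - ‖b‖ ^ q| * ‖b‖ := by
        rw [norm_smul, norm_smul, Real.norm_eq_abs, Real.norm_eq_abs,
          abs_of_nonneg (Real.rpow_nonneg h0a q)]
    _ ≤ ‖a‖ ^ q * ‖a - b‖ + q * ‖a‖ ^ q * (‖a‖ - ‖b‖) := by
        have habs : |‖a‖ ^ q - ‖b‖ ^ q| = ‖a‖ ^ q - ‖b‖ ^ q :=
          abs_of_nonneg (by simpa using sub_nonneg.2 (Real.rpow_le_rpow h0b hab hq.le))
        rw [habs]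
        linarith [rpow_sub_rpow_mul_le hq h0b hab]
    _ ≤ ‖a‖ ^ q * ‖a - b‖ + q * ‖a‖ ^ q * ‖a - b‖ := by
        have : ‖a‖ - ‖b‖ ≤ ‖a - b‖ := norm_sub_norm_le a b
        have hn : (0:ℝ) ≤ q * ‖a‖ ^ q := by positivity
        nlinarith
    _ = (1 + q) * ‖a‖ ^ q * ‖a - b‖ := by ring

/-- Local Lipschitz estimate for `y ↦ ‖y‖^q • y`. -/
lemma norm_rpow_smul_sub_le {q : ℝ} (hq : 0 < q) (a b : E) :
    ‖(‖a‖ ^ q) • a - (‖b‖ ^ q) • b‖ ≤ (1 + q) * max ‖a‖ ‖b‖ ^ q * ‖a - b‖ := by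
  rcases le_total ‖b‖ ‖a‖ with h | h
  · simpa [max_eq_left h] using norm_rpow_smul_sub_le_aux hq h
  · have := norm_rpow_smul_sub_le_aux hq (a := b) (b := a) h
    rw [norm_sub_rev, norm_sub_rev b a] at this
    simpa [max_eq_right h] using this

section Acomp

variable {n : ℕ} {σ a₀ a₁ ν c : ℝ}

variable (hσne : σ ≠ -1) (ha₀ : 0 < a₀) (hν : ν = (n : ℝ) * (1 + σ)) (hν0 : ν ≠ 0)
  (hc : c = ν * a₁ / (2 * a₀))

include hσne ha₀ hν hν0 hc

lemma scale_sq_eq {t : ℝ} (ht : 0 < 1 + c * t) :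
    (scaleFun n σ a₀ a₁ t) ^ 2 = a₀ ^ 2 * (1 + c * t) ^ (4 / ν) := by
  have harg : 1 + (n : ℝ) * (1 + σ) * a₁ * t / (2 * a₀) = 1 + c * t := by
    rw [hc, hν]; ring
  rw [scaleFun, if_neg hσne, harg, mul_pow, ← hν]
  congr 1
  rw [← Real.rpow_natCast ((1 + c * t) ^ (2 / ν)) 2, ← Real.rpow_mul ht.le]
  norm_num
  congr 1
  field_simp
  ring

lemma scale_sq_hasDerivAt {t : ℝ} (ht : 0 < 1 + c * t) :
    HasDerivAt (fun s => (scaleFun n σ a₀ a₁ s) ^ 2)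
      (a₀ ^ 2 * ((4 / ν) * (1 + c * t) ^ (4 / ν - 1) * c)) t := by
  have hev : ∀ᶠ s in nhds t, 0 < 1 + c * s := by
    have hcont : Continuous fun s : ℝ => 1 + c * s := by continuity
    exact hcont.continuousAt.eventually (eventually_gt_nhds ht)
  have hinner : HasDerivAt (fun s : ℝ => 1 + c * s) c t := by
    simpa using ((hasDerivAt_id t).const_mul c).const_add 1
  have houter := Real.hasDerivAt_rpow_const (x := 1 + c * t) (p := 4 / ν) (Or.inl ht.ne')
  have hd := (houter.comp t hinner).const_mul (a₀ ^ 2)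
  apply hd.congr_of_eventuallyEq
  filter_upwards [hev] with s hs
  exact scale_sq_eq hσne ha₀ hν hν0 hc hs

lemma q0_eq {t : ℝ} (ht : 0 < 1 + c * t) :
    q0Fun n σ a₀ a₁ t = (4 / ν) * c / (1 + c * t) := by
  rw [q0Fun, (scale_sq_hasDerivAt hσne ha₀ hν hν0 hc ht).deriv,
    scale_sq_eq hσne ha₀ hν hν0 hc ht]
  rw [show (4 / ν - 1 : ℝ) = 4 / ν - 1 from rfl, Real.rpow_sub ht, Real.rpow_one]
  have h1 : (1 + c * t) ^ (4 / ν) ≠ 0 := (Real.rpow_pos_of_pos ht _).ne'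
  field_simp

lemma q0_deriv {t : ℝ} (ht : 0 < 1 + c * t) :
    deriv (q0Fun n σ a₀ a₁) t = -((4 / ν) * c ^ 2) / (1 + c * t) ^ 2 := by
  have hev : ∀ᶠ s in nhds t, 0 < 1 + c * s := by
    have hcont : Continuous fun s : ℝ => 1 + c * s := by continuity
    exact hcont.continuousAt.eventually (eventually_gt_nhds ht)
  have heq : q0Fun n σ a₀ a₁ =ᶠ[nhds t] fun s => (4 / ν) * c / (1 + c * s) := by
    filter_upwards [hev] with s hs
    exact q0_eq hσne ha₀ hν hν0 hc hs
  rw [heq.deriv_eq]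
  have hinner : HasDerivAt (fun s : ℝ => 1 + c * s) c t := by
    simpa using ((hasDerivAt_id t).const_mul c).const_add 1
  have hd := (hasDerivAt_const t ((4 / ν) * c)).div hinner ht.ne'
  rw [show (fun s => 4 / ν * c / (1 + c * s)) = ((fun _ => 4 / ν * c) / fun s => 1 + c * s)
    from rfl, hd.deriv]
  field_simp
  ring

lemma AFun_eq {t : ℝ} (ht : 0 < 1 + c * t) :
    AFun n σ a₀ a₁ t = (4 / ν) * (2 - 4 / ν) * c ^ 2 / 4 / (1 + c * t) ^ 2 := by
  rw [AFun, q0_eq hσne ha₀ hν hν0 hc ht, q0_deriv hσne ha₀ hν hν0 hc ht]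
  have h1 : (1 + c * t) ≠ 0 := ht.ne'
  field_simp
  ring

end Acomp

lemma hasDerivWithinAt_singleton' {H : Type*} [NormedAddCommGroup H] [NormedSpace ℝ H]
    (f : ℝ → H) (x : ℝ) (d : H) : HasDerivWithinAt f d {x} x := by
  rw [hasDerivWithinAt_iff_tendsto_slope]
  rw [Set.diff_self, nhdsWithin_empty]
  exact Filter.tendsto_bot

lemma global_existence {H : Type*} [NormedAddCommGroup H] [NormedSpace ℝ H] [CompleteSpace H]
    (F : ℝ → H → H) (T₀ : ℝ) (hT₀ : 0 < T₀) (x₀ : H)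
    (cont : ∀ x : H, ContinuousOn (fun t => F t x) (Ico 0 T₀))
    (lip : ∀ T, T ∈ Ico (0:ℝ) T₀ → ∀ R : ℝ, ∃ L : NNReal,
      ∀ t ∈ Icc (0:ℝ) T, LipschitzOnWith L (F t) (closedBall 0 R))
    (bdd : ∀ T, T ∈ Ico (0:ℝ) T₀ → ∃ B : ℝ, 0 ≤ B ∧ ∀ τ ∈ Icc (0:ℝ) T, ∀ X : ℝ → H,
      X 0 = x₀ → (∀ t ∈ Icc (0:ℝ) τ, HasDerivWithinAt X (F t (X t)) (Icc 0 τ) t) →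
      ∀ t ∈ Icc (0:ℝ) τ, ‖X t‖ ≤ B) :
    ∃ X : ℝ → H, X 0 = x₀ ∧
      ∀ t ∈ Ico (0:ℝ) T₀, HasDerivWithinAt X (F t (X t)) (Ico 0 T₀) t := by
  -- Step 1: solutions up to any time T < T₀.
  have sol : ∀ T ∈ Ico (0:ℝ) T₀, ∃ X : ℝ → H, X 0 = x₀ ∧
      ∀ t ∈ Icc (0:ℝ) T, HasDerivWithinAt X (F t (X t)) (Icc 0 T) t := by
    intro T hT
    set T' := (T + T₀) / 2 with hT'def
    have hTT' : T < T' := by simp only [hT'def]; linarith [hT.2]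
    have hT'mem : T' ∈ Ico (0:ℝ) T₀ := ⟨by simp only [hT'def]; linarith [hT.1, hT.2],
      by simp only [hT'def]; linarith [hT.2]⟩
    obtain ⟨B, hB0, hBbound⟩ := bdd T' hT'mem
    obtain ⟨L, hL⟩ := lip T' hT'mem (B + 1)
    have hIccsub : Icc (0:ℝ) T' ⊆ Ico 0 T₀ := fun s hs => ⟨hs.1, lt_of_le_of_lt hs.2 hT'mem.2⟩
    obtain ⟨M₀, hM₀⟩ : ∃ M₀, ∀ t ∈ Icc (0:ℝ) T', ‖F t 0‖ ≤ M₀ :=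
      isCompact_Icc.exists_bound_of_continuousOn ((cont 0).mono hIccsub)
    set C := max M₀ 0 + (L : ℝ) * (B + 1) + 1 with hCdef
    have hC0 : 0 < C := by
      have h1 : (0:ℝ) ≤ max M₀ 0 := le_max_right _ _
      have h2 : (0:ℝ) ≤ (L : ℝ) * (B + 1) := by positivity
      simp only [hCdef]; linarith
    have hFC : ∀ t ∈ Icc (0:ℝ) T', ∀ x ∈ closedBall (0:H) (B + 1), ‖F t x‖ ≤ C := by
      intro t ht x hx
      have h0mem : (0:H) ∈ closedBall (0:H) (B + 1) := mem_closedBall_self (by linarith)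
      have h1 : dist (F t x) (F t 0) ≤ (L : ℝ) * dist x 0 := (hL t ht).dist_le_mul x hx 0 h0mem
      have h2 : dist x 0 ≤ B + 1 := mem_closedBall.1 hx
      have h3 : ‖F t x‖ ≤ ‖F t 0‖ + dist (F t x) (F t 0) := by
        rw [dist_eq_norm]
        have := norm_sub_norm_le (F t x) (F t 0)
        linarith
      have h4 : (L : ℝ) * dist x 0 ≤ (L : ℝ) * (B + 1) :=
        mul_le_mul_of_nonneg_left h2 L.coe_nonneg
      have h5 := hM₀ t ht
      have h6 : M₀ ≤ max M₀ 0 := le_max_left _ _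
      simp only [hCdef]; linarith
    set ε := min (T' - T) (1 / (C + 1)) with hεdef
    have hε0 : 0 < ε := lt_min (by linarith) (by positivity)
    have hεC : C * ε ≤ 1 := by
      have h1 : ε ≤ 1 / (C + 1) := min_le_right _ _
      have h2 : C * ε ≤ C * (1 / (C + 1)) := mul_le_mul_of_nonneg_left h1 hC0.le
      have h3 : C * (1 / (C + 1)) ≤ 1 := by
        rw [mul_one_div, div_le_one (by linarith)]; linarith
      exact h2.trans h3
    have hεT' : T + ε ≤ T' := by
      have := min_le_left (T' - T) (1 / (C + 1)); simp only [hεdef]; linarith [this]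
    -- Step 1a: local solutions of uniform length ε
    have loc : ∀ t₀ ∈ Icc (0:ℝ) T, ∀ z : H, ‖z‖ ≤ B → ∃ Z : ℝ → H, Z t₀ = z ∧
        ∀ t ∈ Icc t₀ (t₀ + ε), HasDerivWithinAt Z (F t (Z t)) (Icc t₀ (t₀ + ε)) t := by
      intro t₀ ht₀ z hz
      have hsub : Icc t₀ (t₀ + ε) ⊆ Icc (0:ℝ) T' := fun s hs =>
        ⟨le_trans ht₀.1 hs.1, by linarith [hs.2, ht₀.2, hεT']⟩
      have hballsub : closedBall z 1 ⊆ closedBall (0:H) (B + 1) := by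
        apply closedBall_subset_closedBall'
        rw [dist_zero_right]
        linarith
      have hballsub' : closedBall z ((1 : NNReal) : ℝ) ⊆ closedBall (0:H) (B + 1) := by
        rw [NNReal.coe_one]; exact hballsub
      have hpl : IsPicardLindelof F (tmin := t₀) (tmax := t₀ + ε)
          ⟨t₀, ⟨le_refl _, by linarith⟩⟩ z (1 : NNReal) 0 ⟨C, hC0.le⟩ L :=
        { lipschitzOnWith := fun t ht => ((hL t (hsub ht)).mono hballsub')
          continuousOn := fun x _ => (cont x).mono (fun s hs => hIccsub (hsub hs))
          norm_le := fun t ht x hx => hFC t (hsub ht) x (hballsub' hx)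
          mul_max_le := by
            show C * max (t₀ + ε - t₀) (t₀ - t₀) ≤ 1 - 0
            rw [add_sub_cancel_left, sub_self, max_eq_left hε0.le, sub_zero]
            exact hεC }
      obtain ⟨Z, hZ0, hZd⟩ := hpl.exists_eq_forall_mem_Icc_hasDerivWithinAt₀
      exact ⟨Z, hZ0, hZd⟩
    -- Step 1b: continuation
    set S : Set ℝ := {τ | τ ∈ Icc (0:ℝ) T ∧ ∃ X : ℝ → H, X 0 = x₀ ∧
        ∀ t ∈ Icc (0:ℝ) τ, HasDerivWithinAt X (F t (X t)) (Icc 0 τ) t} with hSdef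
    have hS0 : (0:ℝ) ∈ S := by
      refine ⟨⟨le_refl 0, hT.1⟩, fun _ => x₀, rfl, ?_⟩
      intro t ht
      have ht0 : t = 0 := le_antisymm ht.2 ht.1
      subst ht0
      rw [Icc_self]
      exact hasDerivWithinAt_singleton' _ _ _
    have hSne : S.Nonempty := ⟨0, hS0⟩
    have hSbdd : BddAbove S := ⟨T, fun τ hτ => hτ.1.2⟩
    have hext : ∀ τ ∈ S, min T (τ + ε) ∈ S := by
      rintro τ ⟨hτmem, X, hX0, hXd⟩
      have hXτB : ‖X τ‖ ≤ B :=
        hBbound τ ⟨hτmem.1, le_trans hτmem.2 hTT'.le⟩ X hX0 hXd τ ⟨hτmem.1, le_refl τ⟩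
      obtain ⟨Z, hZτ, hZd⟩ := loc τ hτmem (X τ) hXτB
      set T'' := min T (τ + ε) with hT''def
      have hτT'' : τ ≤ T'' := le_min hτmem.2 (by linarith)
      have hT''le : T'' ≤ τ + ε := min_le_right _ _
      set W : ℝ → H := fun t => if t ≤ τ then X t else Z t with hWdef
      have hWX : ∀ s ∈ Icc (0:ℝ) T'' ∩ Iic τ, W s = X s := fun s hs => if_pos hs.2
      have hWZ : ∀ s ∈ Icc (0:ℝ) T'' ∩ Ici τ, W s = Z s := by
        intro s hs
        rcases le_or_gt s τ with h | h
        · have hsτ : s = τ := le_antisymm h hs.2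
          subst hsτ
          simp only [hWdef, if_pos (le_refl s)]
          exact hZτ.symm
        · exact if_neg (not_le.2 h)
      refine ⟨⟨le_trans hτmem.1 hτT'', min_le_left _ _⟩, W, ?_, ?_⟩
      · simp only [hWdef, if_pos hτmem.1]; exact hX0
      intro t ht
      have h1 : t ≤ τ → HasDerivWithinAt W (F t (W t)) (Icc 0 T'' ∩ Iic τ) t := by
        intro htτ
        have hd := (hXd t ⟨ht.1, htτ⟩).mono
          (show Icc (0:ℝ) T'' ∩ Iic τ ⊆ Icc 0 τ from fun s hs => ⟨hs.1.1, hs.2⟩)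
        have hWt : W t = X t := hWX t ⟨ht, htτ⟩
        rw [show F t (W t) = F t (X t) from by rw [hWt]]
        exact hd.congr hWX hWt
      have h2 : τ ≤ t → HasDerivWithinAt W (F t (W t)) (Icc 0 T'' ∩ Ici τ) t := by
        intro hτt
        have hd := (hZd t ⟨hτt, le_trans ht.2 hT''le⟩).mono
          (show Icc (0:ℝ) T'' ∩ Ici τ ⊆ Icc τ (τ + ε) from fun s hs =>
            ⟨hs.2, le_trans hs.1.2 hT''le⟩)
        have hWt : W t = Z t := hWZ t ⟨ht, hτt⟩
        rw [show F t (W t) = F t (Z t) from by rw [hWt]]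
        exact hd.congr hWZ hWt
      rcases lt_trichotomy t τ with hlt | heq | hgt
      · exact (h1 hlt.le).mono_of_mem_nhdsWithin (inter_mem_nhdsWithin _ (Iic_mem_nhds hlt))
      · have hu := (h1 heq.le).union (h2 heq.ge)
        rwa [← inter_union_distrib_left, Iic_union_Ici, inter_univ] at hu
      · exact (h2 hgt.le).mono_of_mem_nhdsWithin (inter_mem_nhdsWithin _ (Ici_mem_nhds hgt))
    -- Step 1c: T ∈ S
    have hTS : T ∈ S := by
      obtain ⟨τ, hτS, hτgt⟩ := exists_lt_of_lt_csSup hSne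
        (show sSup S - ε / 2 < sSup S by linarith)
      rcases le_or_gt T (τ + ε) with hcase | hcase
      · have h := hext τ hτS; rwa [min_eq_left hcase] at h
      · have h := hext τ hτS
        rw [min_eq_right hcase.le] at h
        have hle : τ + ε ≤ sSup S := le_csSup hSbdd h
        have hτle : τ ≤ sSup S := le_csSup hSbdd hτS
        linarith
    exact hTS.2
  -- Step 2: uniqueness
  choose! X hX0 hXd using sol
  have huniq : ∀ T₁ ∈ Ico (0:ℝ) T₀, ∀ T₂ ∈ Ico (0:ℝ) T₀, T₁ ≤ T₂ →
      EqOn (X T₁) (X T₂) (Icc 0 T₁) := by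
    intro T₁ hT₁ T₂ hT₂ hle
    obtain ⟨B, hB0, hBbound⟩ := bdd T₂ hT₂
    obtain ⟨L, hL⟩ := lip T₂ hT₂ B
    set s : ℝ → Set H := fun t => if t ∈ Icc (0:ℝ) T₂ then closedBall 0 B else ∅ with hsdef
    have hv : ∀ t, LipschitzOnWith L (F t) (s t) := by
      intro t
      by_cases h : t ∈ Icc (0:ℝ) T₂
      · simp only [hsdef, if_pos h]; exact hL t h
      · simp only [hsdef, if_neg h]; exact lipschitzOnWith_empty _ _
    have derivIci : ∀ (T : ℝ), T ∈ Ico (0:ℝ) T₀ → ∀ t ∈ Ico (0:ℝ) T₁, T₁ ≤ T →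
        HasDerivWithinAt (X T) (F t (X T t)) (Ici t) t := by
      intro T hT t ht hT₁T
      have hd := (hXd T hT t ⟨ht.1, le_trans ht.2.le hT₁T⟩).mono
        (show Icc t T₁ ⊆ Icc 0 T from fun u hu => ⟨le_trans ht.1 hu.1, le_trans hu.2 hT₁T⟩)
      apply hd.mono_of_mem_nhdsWithin
      rw [show Icc t T₁ = Ici t ∩ Iic T₁ from (Ici_inter_Iic).symm]
      exact inter_mem_nhdsWithin _ (Iic_mem_nhds ht.2)
    have hcont1 : ContinuousOn (X T₁) (Icc 0 T₁) :=
      fun u hu => ((hXd T₁ hT₁ u hu).continuousWithinAt)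
    have hcont2 : ContinuousOn (X T₂) (Icc 0 T₁) := by
      have h : ContinuousOn (X T₂) (Icc 0 T₂) :=
        fun u hu => (hXd T₂ hT₂ u hu).continuousWithinAt
      exact h.mono (Icc_subset_Icc_right hle)
    have hmem1 : ∀ t ∈ Ico (0:ℝ) T₁, X T₁ t ∈ s t := by
      intro t ht
      have htmem : t ∈ Icc (0:ℝ) T₂ := ⟨ht.1, le_trans ht.2.le hle⟩
      simp only [hsdef, if_pos htmem, mem_closedBall, dist_zero_right]
      exact hBbound T₁ ⟨hT₁.1, hle⟩ (X T₁) (hX0 T₁ hT₁) (hXd T₁ hT₁) t ⟨ht.1, ht.2.le⟩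
    have hmem2 : ∀ t ∈ Ico (0:ℝ) T₁, X T₂ t ∈ s t := by
      intro t ht
      have htmem : t ∈ Icc (0:ℝ) T₂ := ⟨ht.1, le_trans ht.2.le hle⟩
      simp only [hsdef, if_pos htmem, mem_closedBall, dist_zero_right]
      exact hBbound T₂ ⟨hT₂.1, le_refl _⟩ (X T₂) (hX0 T₂ hT₂) (hXd T₂ hT₂) t htmem
    have hinit : X T₁ 0 = X T₂ 0 := by rw [hX0 T₁ hT₁, hX0 T₂ hT₂]
    exact ODE_solution_unique_of_mem_Icc_right (fun t _ => hv t) hcont1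
      (fun t ht => derivIci T₁ hT₁ t ht (le_refl _)) hmem1 hcont2
      (fun t ht => derivIci T₂ hT₂ t ht hle) hmem2 hinit
  -- Step 3: glue into a global solution
  set Xg : ℝ → H := fun t => if ht : t ∈ Ico (0:ℝ) T₀ then X ((t + T₀) / 2) t else x₀
    with hXgdef
  have hmid : ∀ t ∈ Ico (0:ℝ) T₀, ((t + T₀) / 2) ∈ Ico (0:ℝ) T₀ ∧ t ≤ (t + T₀) / 2 := by
    intro t ht
    exact ⟨⟨by linarith [ht.1, hT₀], by linarith [ht.2]⟩, by linarith [ht.2]⟩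
  have hcons : ∀ T ∈ Ico (0:ℝ) T₀, ∀ t ∈ Ico (0:ℝ) T₀, t ≤ T → Xg t = X T t := by
    intro T hT t ht htT
    simp only [hXgdef, dif_pos ht]
    rcases le_total ((t + T₀) / 2) T with h | h
    · exact huniq _ (hmid t ht).1 T hT h ⟨ht.1, (hmid t ht).2⟩
    · exact (huniq T hT _ (hmid t ht).1 h ⟨ht.1, htT⟩).symm
  have h0mem : (0:ℝ) ∈ Ico (0:ℝ) T₀ := ⟨le_refl 0, hT₀⟩
  refine ⟨Xg, ?_, ?_⟩
  · simp only [hXgdef, dif_pos h0mem]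
    exact hX0 _ (hmid 0 h0mem).1
  · intro t ht
    set T := (t + T₀) / 2 with hTdef
    have hTmem := (hmid t ht).1
    have htT := (hmid t ht).2
    have htTlt : t < T := by simp only [hTdef]; linarith [ht.2]
    have hd := (hXd T hTmem t ⟨ht.1, htT⟩).mono
      (show Ico (0:ℝ) T₀ ∩ Iic T ⊆ Icc 0 T from fun s hs => ⟨hs.1.1, hs.2⟩)
    have hd2 := hd.congr
      (fun s hs => hcons T hTmem s hs.1 hs.2)
      (hcons T hTmem t ht htT)
    rw [show F t (Xg t) = F t (X T t) from by rw [hcons T hTmem t ht htT]]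
    exact hd2.mono_of_mem_nhdsWithin (inter_mem_nhdsWithin _ (Iic_mem_nhds htTlt))

variable {E : Type*} [NormedAddCommGroup E] [InnerProductSpace ℝ E]

/-- Energy estimate: for a solution of `y'' = -Ab(t) y - lam ‖y‖^(p-1) y` with `Ab` positive
and nondecreasing, the energy `e(t)/Ab(t)` is nonincreasing. -/
lemma energy_bound {τ lam p : ℝ} (hτ : 0 ≤ τ) (hlam : 0 ≤ lam) (hp : 1 < p)
    (Ab dAb : ℝ → ℝ) (X : ℝ → E × E)
    (hAb : ∀ t ∈ Icc (0:ℝ) τ, HasDerivAt Ab (dAb t) t)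
    (hAbpos : ∀ t ∈ Icc (0:ℝ) τ, 0 < Ab t)
    (hdAb : ∀ t ∈ Icc (0:ℝ) τ, 0 ≤ dAb t)
    (hXd : ∀ t ∈ Icc (0:ℝ) τ, HasDerivWithinAt X
      ((X t).2, -(Ab t • (X t).1) - (lam * ‖(X t).1‖ ^ (p - 1)) • (X t).1) (Icc 0 τ) t) :
    ∀ t ∈ Icc (0:ℝ) τ,
      (‖(X t).2‖ ^ 2 + Ab t * ‖(X t).1‖ ^ 2
        + (2 * lam / (p + 1)) * (‖(X t).1‖ ^ 2) ^ ((p + 1) / 2)) * Ab 0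
      ≤ (‖(X 0).2‖ ^ 2 + Ab 0 * ‖(X 0).1‖ ^ 2
        + (2 * lam / (p + 1)) * (‖(X 0).1‖ ^ 2) ^ ((p + 1) / 2)) * Ab t := by
  set y : ℝ → E := fun t => (X t).1 with hydef
  set v : ℝ → E := fun t => (X t).2 with hvdef
  set e : ℝ → ℝ := fun t => ‖v t‖ ^ 2 + Ab t * ‖y t‖ ^ 2
    + (2 * lam / (p + 1)) * (‖y t‖ ^ 2) ^ ((p + 1) / 2) with hedef
  have hp1 : (0:ℝ) < p + 1 := by linarith
  -- continuity of X on Icc 0 τ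
  have hXcont : ContinuousOn X (Icc 0 τ) := fun u hu => (hXd u hu).continuousWithinAt
  have hycont : ContinuousOn y (Icc 0 τ) := continuous_fst.comp_continuousOn hXcont
  have hvcont : ContinuousOn v (Icc 0 τ) := continuous_snd.comp_continuousOn hXcont
  have hAbcont : ContinuousOn Ab (Icc 0 τ) :=
    fun u hu => (hAb u hu).continuousAt.continuousWithinAt
  have hecont : ContinuousOn e (Icc 0 τ) := by
    apply ContinuousOn.add
    apply ContinuousOn.add
    · exact (hvcont.norm.pow 2)
    · exact hAbcont.mul (hycont.norm.pow 2)
    · exact ContinuousOn.mul continuousOn_const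
        (ContinuousOn.rpow_const (hycont.norm.pow 2)
          (fun x _ => Or.inr (by positivity)))
  -- derivative of the energy in the interior
  have hkey : ∀ t ∈ Ioo (0:ℝ) τ, HasDerivAt e (dAb t * ‖y t‖ ^ 2) t := by
    intro t ht
    have htmem : t ∈ Icc (0:ℝ) τ := Ioo_subset_Icc_self ht
    have hX : HasDerivAt X (v t, -(Ab t • y t) - (lam * ‖y t‖ ^ (p - 1)) • y t) t :=
      (hXd t htmem).hasDerivAt (Icc_mem_nhds ht.1 ht.2)
    set w : E := -(Ab t • y t) - (lam * ‖y t‖ ^ (p - 1)) • y t with hwdef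
    have hyd : HasDerivAt y (v t) t :=
      (ContinuousLinearMap.fst ℝ E E).hasFDerivAt.comp_hasDerivAt t hX
    have hvd : HasDerivAt v w t :=
      (ContinuousLinearMap.snd ℝ E E).hasFDerivAt.comp_hasDerivAt t hX
    -- derivative of ‖y‖² and ‖v‖²
    have hud : HasDerivAt (fun s => ‖y s‖ ^ 2) (2 * ⟪y t, v t⟫) t := by
      have h := HasDerivAt.inner ℝ hyd hyd
      have heq : (fun s => ‖y s‖ ^ 2) = fun s => ⟪y s, y s⟫ := by
        funext s; rw [real_inner_self_eq_norm_sq]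
      rw [heq]
      rw [show (2:ℝ) * ⟪y t, v t⟫ = ⟪y t, v t⟫ + ⟪v t, y t⟫ by
        rw [real_inner_comm (v t) (y t)]; ring]
      exact h
    have hvnd : HasDerivAt (fun s => ‖v s‖ ^ 2) (2 * ⟪v t, w⟫) t := by
      have h := HasDerivAt.inner ℝ hvd hvd
      have heq : (fun s => ‖v s‖ ^ 2) = fun s => ⟪v s, v s⟫ := by
        funext s; rw [real_inner_self_eq_norm_sq]
      rw [heq]
      rw [show (2:ℝ) * ⟪v t, w⟫ = ⟪v t, w⟫ + ⟪w, v t⟫ by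
        rw [real_inner_comm w (v t)]; ring]
      exact h
    have hr1 : (1:ℝ) ≤ (p + 1) / 2 := by linarith
    have hund : HasDerivAt (fun s => (‖y s‖ ^ 2) ^ ((p + 1) / 2))
        (((p + 1) / 2) * (‖y t‖ ^ 2) ^ ((p + 1) / 2 - 1) * (2 * ⟪y t, v t⟫)) t := by
      have houter := Real.hasDerivAt_rpow_const (x := ‖y t‖ ^ 2) (p := (p + 1) / 2)
        (Or.inr hr1)
      exact houter.comp t hud
    have hAbd := hAb t htmem
    have htotal := (hvnd.add ((hAbd.mul hud).add (hund.const_mul (2 * lam / (p + 1)))))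
    have hefun : e = fun s => ‖v s‖ ^ 2 + (Ab s * ‖y s‖ ^ 2
        + (2 * lam / (p + 1)) * (‖y s‖ ^ 2) ^ ((p + 1) / 2)) := by
      funext s; rw [hedef]; ring
    rw [hefun]
    refine htotal.congr_deriv ?_
    -- algebraic simplification of the derivative value
    have hinner : ⟪v t, w⟫ = -(Ab t) * ⟪y t, v t⟫ - (lam * ‖y t‖ ^ (p - 1)) * ⟪y t, v t⟫ := by
      rw [hwdef, inner_sub_right, inner_neg_right, real_inner_smul_right,
        real_inner_smul_right, real_inner_comm (v t) (y t)]
      ring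
    have hpow : (‖y t‖ ^ 2) ^ ((p + 1) / 2 - 1) = ‖y t‖ ^ (p - 1) := by
      rw [← Real.rpow_natCast ‖y t‖ 2, ← Real.rpow_mul (norm_nonneg _)]
      congr 1
      push_cast
      ring
    rw [hinner, hpow]
    field_simp
    ring
  -- `e / Ab` is antitone on `[0, τ]`
  have hAbne : ∀ u ∈ Icc (0:ℝ) τ, Ab u ≠ 0 := fun u hu => (hAbpos u hu).ne'
  have hgd : ∀ t ∈ Ioo (0:ℝ) τ, HasDerivAt (fun s => e s / Ab s)
      ((dAb t * ‖y t‖ ^ 2 * Ab t - e t * dAb t) / (Ab t) ^ 2) t := by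
    intro t ht
    have htmem := Ioo_subset_Icc_self ht
    exact (hkey t ht).div (hAb t htmem) (hAbne t htmem)
  have hanti : AntitoneOn (fun s => e s / Ab s) (Icc 0 τ) := by
    apply antitoneOn_of_deriv_nonpos (convex_Icc 0 τ)
    · exact hecont.div hAbcont hAbne
    · intro x hx
      rw [interior_Icc] at hx
      exact (hgd x hx).differentiableAt.differentiableWithinAt
    · intro x hx
      rw [interior_Icc] at hx
      rw [(hgd x hx).deriv]
      apply div_nonpos_of_nonpos_of_nonneg _ (sq_nonneg _)
      have hxmem := Ioo_subset_Icc_self hx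
      have h1 : dAb x * ‖y x‖ ^ 2 * Ab x - e x * dAb x = dAb x * (Ab x * ‖y x‖ ^ 2 - e x) := by
        ring
      rw [h1]
      apply mul_nonpos_of_nonneg_of_nonpos (hdAb x hxmem)
      have h2 : (0:ℝ) ≤ ‖v x‖ ^ 2 := sq_nonneg _
      have h3 : (0:ℝ) ≤ (2 * lam / (p + 1)) * (‖y x‖ ^ 2) ^ ((p + 1) / 2) := by positivity
      simp only [hedef]
      linarith
  -- conclude
  intro t ht
  have h0mem : (0:ℝ) ∈ Icc (0:ℝ) τ := ⟨le_refl 0, hτ⟩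
  have hg := hanti h0mem ht ht.1
  -- e t / Ab t ≤ e 0 / Ab 0
  have hAb0 := hAbpos 0 h0mem
  have hAbt := hAbpos t ht
  rw [div_le_div_iff₀ hAbt hAb0] at hg
  exact hg

/-- Case (iv): `a₁ < 0`, `σ > -1 + 2/n` (so `T₁ = T₀ = -2a₀/(n(1+σ)a₁) > 0`), `λ ≥ 0`.
Global existence of a `C¹` solution of `D_t²Y + A(t)Y + λ|Y|^{p-1}Y = 0` on `[0, T₀)`. -/
theorem stmt_7 (n : ℕ) (hn : 1 ≤ n) (σ a₀ a₁ lam p : ℝ)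
    (ha₀ : 0 < a₀) (ha₁ : a₁ < 0) (hσ : -1 + 2 / (n : ℝ) < σ) (hp : 1 < p)
    (hlam : 0 ≤ lam)
    (Y₀ Y₁ : EuclideanSpace ℝ (Fin n)) :
    ∃ Y Y' : ℝ → EuclideanSpace ℝ (Fin n),
      (∀ t ∈ Ico (0 : ℝ) (-(2 * a₀) / ((n : ℝ) * (1 + σ) * a₁)),
        HasDerivWithinAt Y (Y' t) (Ico (0 : ℝ) (-(2 * a₀) / ((n : ℝ) * (1 + σ) * a₁))) t) ∧
      (∀ t ∈ Ico (0 : ℝ) (-(2 * a₀) / ((n : ℝ) * (1 + σ) * a₁)),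
        HasDerivWithinAt Y'
          (-(AFun n σ a₀ a₁ t • Y t) - (lam * ‖Y t‖ ^ (p - 1)) • Y t)
          (Ico (0 : ℝ) (-(2 * a₀) / ((n : ℝ) * (1 + σ) * a₁))) t) ∧
      ContinuousOn Y' (Ico (0 : ℝ) (-(2 * a₀) / ((n : ℝ) * (1 + σ) * a₁))) ∧
      Y 0 = Y₀ ∧ Y' 0 = Y₁ := by
  classical
  have hn0 : (0:ℝ) < (n:ℝ) := by exact_mod_cast Nat.pos_of_ne_zero (by omega)
  have hν2 : 2 < (n:ℝ) * (1 + σ) := by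
    have h2n : 2 / (n:ℝ) < 1 + σ := by linarith
    have h := (div_lt_iff₀ hn0).1 h2n
    linarith [mul_comm ((1:ℝ) + σ) (n:ℝ)]
  set ν : ℝ := (n:ℝ) * (1 + σ) with hνdef
  have hνpos : 0 < ν := by linarith
  have hν0 : ν ≠ 0 := hνpos.ne'
  have hσne : σ ≠ -1 := by
    intro h
    have hz : ν = 0 := by rw [hνdef, h]; ring
    rw [hz] at hνpos
    exact lt_irrefl 0 hνpos
  set c : ℝ := ν * a₁ / (2 * a₀) with hcdef
  have hc0 : c < 0 := div_neg_of_neg_of_pos (mul_neg_of_pos_of_neg hνpos ha₁) (by linarith)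
  set T₀ : ℝ := -(2 * a₀) / (ν * a₁) with hT₀def
  have hT₀c : T₀ = -1 / c := by
    rw [hT₀def, hcdef]
    have h1 : ν * a₁ ≠ 0 := (mul_neg_of_pos_of_neg hνpos ha₁).ne
    field_simp
  have hcc : c * (-1 / c) = -1 := by
    field_simp
    rw [div_self hc0.ne]
  have hbt : ∀ t : ℝ, t < T₀ ↔ 0 < 1 + c * t := by
    intro t
    rw [hT₀c]
    constructor
    · intro h
      have h2 := mul_lt_mul_of_neg_left h hc0
      rw [hcc] at h2
      linarith
    · intro h
      by_contra hcon
      push_neg at hcon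
      have h2 := mul_le_mul_of_nonpos_left hcon hc0.le
      rw [hcc] at h2
      linarith
  have hT₀pos : 0 < T₀ := (hbt 0).2 (by norm_num)
  obtain ⟨K, hKdef⟩ : ∃ K : ℝ, K = (4 / ν) * (2 - 4 / ν) * c ^ 2 / 4 := ⟨_, rfl⟩
  have hK0 : 0 < K := by
    rw [hKdef]
    have h1 : (0:ℝ) < 4 / ν := by positivity
    have h2 : 4 / ν < 2 := by rw [div_lt_iff₀ hνpos]; linarith
    have h3 : (0:ℝ) < c ^ 2 := by nlinarith
    have h4 := mul_pos (mul_pos h1 (by linarith : (0:ℝ) < 2 - 4 / ν)) h3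
    linarith
  obtain ⟨Ab, hAbdef⟩ : ∃ f : ℝ → ℝ, f = fun t : ℝ => K / (1 + c * t) ^ 2 := ⟨_, rfl⟩
  have hAbeq : ∀ t : ℝ, Ab t = K / (1 + c * t) ^ 2 := fun t => by rw [hAbdef]
  have hAFun : ∀ t : ℝ, t < T₀ → AFun n σ a₀ a₁ t = Ab t := by
    intro t ht
    rw [AFun_eq hσne ha₀ hνdef hν0 hcdef ((hbt t).1 ht), hAbeq, hKdef]
  have hAbpos : ∀ t : ℝ, t < T₀ → 0 < Ab t := by
    intro t ht
    rw [hAbeq]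
    exact div_pos hK0 (pow_pos ((hbt t).1 ht) 2)
  have hAbmono : ∀ s t : ℝ, 0 ≤ s → s ≤ t → t < T₀ → Ab s ≤ Ab t := by
    intro s t hs hst ht
    have hbt' : 0 < 1 + c * t := (hbt t).1 ht
    have hcts : c * t ≤ c * s := mul_le_mul_of_nonpos_left hst hc0.le
    have hbs : 0 < 1 + c * s := by linarith
    have hsq : (1 + c * t) ^ 2 ≤ (1 + c * s) ^ 2 := by nlinarith
    rw [hAbeq, hAbeq]
    exact div_le_div_of_nonneg_left hK0.le (pow_pos hbt' 2) hsq
  have hAbderiv : ∀ t : ℝ, t < T₀ → HasDerivAt Ab (2 * K * (-c) / (1 + c * t) ^ 3) t := by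
    intro t ht
    have hb := (hbt t).1 ht
    have hinner : HasDerivAt (fun s : ℝ => 1 + c * s) c t := by
      simpa using ((hasDerivAt_id t).const_mul c).const_add 1
    have hsq : HasDerivAt (fun s : ℝ => (1 + c * s) ^ 2) (2 * (1 + c * t) * c) t := by
      have h := hinner.pow 2
      norm_num at h
      exact h
    have hdiv := (hasDerivAt_const t K).div hsq (pow_ne_zero 2 hb.ne')
    rw [hAbdef]
    refine hdiv.congr_deriv ?_
    field_simp
    ring
  have hdAbnn : ∀ t : ℝ, t < T₀ → 0 ≤ 2 * K * (-c) / (1 + c * t) ^ 3 := by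
    intro t ht
    have hb := (hbt t).1 ht
    apply div_nonneg
    · have : 0 ≤ -c := by linarith
      have h2 : (0:ℝ) ≤ 2 * K := by linarith
      exact mul_nonneg h2 this
    · exact pow_nonneg hb.le 3
  -- the vector field
  set F : ℝ → (EuclideanSpace ℝ (Fin n) × EuclideanSpace ℝ (Fin n)) →
      (EuclideanSpace ℝ (Fin n) × EuclideanSpace ℝ (Fin n)) := fun t x =>
    (x.2, -(AFun n σ a₀ a₁ t • x.1) - (lam * ‖x.1‖ ^ (p - 1)) • x.1) with hFdef
  have hq0 : 0 < p - 1 := by linarith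
  -- continuity of AFun
  have hAFcont : ContinuousOn (AFun n σ a₀ a₁) (Ico 0 T₀) := by
    apply ContinuousOn.congr (f := fun t => Ab t) (g := AFun n σ a₀ a₁)
    · rw [hAbdef]
      apply ContinuousOn.div continuousOn_const
      · apply Continuous.continuousOn
        exact (continuous_const.add (continuous_const.mul continuous_id)).pow 2
      · intro t ht
        exact (pow_pos ((hbt t).1 ht.2) 2).ne'
    · intro t ht
      exact hAFun t ht.2
  -- continuity hypothesis for global existence
  have cont : ∀ x : EuclideanSpace ℝ (Fin n) × EuclideanSpace ℝ (Fin n),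
      ContinuousOn (fun t => F t x) (Ico 0 T₀) := by
    intro x
    simp only [hFdef]
    apply ContinuousOn.prodMk continuousOn_const
    exact ((hAFcont.smul continuousOn_const).neg).sub continuousOn_const
  -- Lipschitz hypothesis
  have lip : ∀ T, T ∈ Ico (0:ℝ) T₀ → ∀ R : ℝ, ∃ L : NNReal,
      ∀ t ∈ Icc (0:ℝ) T, LipschitzOnWith L (F t) (closedBall 0 R) := by
    intro T hT R
    obtain ⟨Λ, hΛdef⟩ : ∃ Λ : ℝ,
      Λ = Ab T + lam * (1 + (p - 1)) * (max R 0) ^ (p - 1) := ⟨_, rfl⟩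
    have hΛ0 : 0 ≤ Λ := by
      rw [hΛdef]
      have h1 := hAbpos T hT.2
      have h2 : (0:ℝ) ≤ lam * (1 + (p - 1)) * (max R 0) ^ (p - 1) := by
        apply mul_nonneg (mul_nonneg hlam (by linarith))
        exact Real.rpow_nonneg (le_max_right R 0) _
      linarith
    refine ⟨Real.toNNReal (max 1 Λ), ?_⟩
    intro t ht
    apply LipschitzOnWith.of_dist_le_mul
    intro x hx z hz
    have htT₀ : t < T₀ := lt_of_le_of_lt ht.2 hT.2
    have hxR : ‖x‖ ≤ R := by rwa [mem_closedBall, dist_zero_right] at hx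
    have hzR : ‖z‖ ≤ R := by rwa [mem_closedBall, dist_zero_right] at hz
    have hx1 : ‖x.1‖ ≤ max R 0 := le_trans (norm_fst_le x) (le_trans hxR (le_max_left R 0))
    have hz1 : ‖z.1‖ ≤ max R 0 := le_trans (norm_fst_le z) (le_trans hzR (le_max_left R 0))
    -- second component estimate
    have hsnd : ‖(F t x).2 - (F t z).2‖ ≤ Λ * ‖x.1 - z.1‖ := by
      have hrw : (F t x).2 - (F t z).2
          = -(AFun n σ a₀ a₁ t • (x.1 - z.1))
            - lam • ((‖x.1‖ ^ (p - 1)) • x.1 - (‖z.1‖ ^ (p - 1)) • z.1) := by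
        simp only [hFdef]
        rw [mul_smul lam _ x.1, mul_smul lam _ z.1, smul_sub, smul_sub]
        abel
      rw [hrw]
      have h1 : ‖-(AFun n σ a₀ a₁ t • (x.1 - z.1))
          - lam • ((‖x.1‖ ^ (p - 1)) • x.1 - (‖z.1‖ ^ (p - 1)) • z.1)‖
          ≤ ‖AFun n σ a₀ a₁ t • (x.1 - z.1)‖
            + ‖lam • ((‖x.1‖ ^ (p - 1)) • x.1 - (‖z.1‖ ^ (p - 1)) • z.1)‖ := by
        calc _ ≤ ‖-(AFun n σ a₀ a₁ t • (x.1 - z.1))‖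
            + ‖lam • ((‖x.1‖ ^ (p - 1)) • x.1 - (‖z.1‖ ^ (p - 1)) • z.1)‖ := norm_sub_le _ _
          _ = _ := by rw [norm_neg]
      have h2 : ‖AFun n σ a₀ a₁ t • (x.1 - z.1)‖ ≤ Ab T * ‖x.1 - z.1‖ := by
        rw [norm_smul, Real.norm_eq_abs, hAFun t htT₀,
          abs_of_pos (hAbpos t htT₀)]
        apply mul_le_mul_of_nonneg_right _ (norm_nonneg _)
        exact hAbmono t T ht.1 ht.2 hT.2
      have h3 : ‖lam • ((‖x.1‖ ^ (p - 1)) • x.1 - (‖z.1‖ ^ (p - 1)) • z.1)‖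
          ≤ lam * ((1 + (p - 1)) * (max R 0) ^ (p - 1) * ‖x.1 - z.1‖) := by
        rw [norm_smul, Real.norm_eq_abs, abs_of_nonneg hlam]
        apply mul_le_mul_of_nonneg_left _ hlam
        calc ‖(‖x.1‖ ^ (p - 1)) • x.1 - (‖z.1‖ ^ (p - 1)) • z.1‖
            ≤ (1 + (p - 1)) * max ‖x.1‖ ‖z.1‖ ^ (p - 1) * ‖x.1 - z.1‖ :=
              norm_rpow_smul_sub_le hq0 x.1 z.1
          _ ≤ (1 + (p - 1)) * (max R 0) ^ (p - 1) * ‖x.1 - z.1‖ := by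
              apply mul_le_mul_of_nonneg_right _ (norm_nonneg _)
              apply mul_le_mul_of_nonneg_left _ (by linarith)
              exact Real.rpow_le_rpow (le_max_of_le_left (norm_nonneg _))
                (max_le hx1 hz1) hq0.le
      calc ‖-(AFun n σ a₀ a₁ t • (x.1 - z.1))
          - lam • ((‖x.1‖ ^ (p - 1)) • x.1 - (‖z.1‖ ^ (p - 1)) • z.1)‖
          ≤ ‖AFun n σ a₀ a₁ t • (x.1 - z.1)‖
            + ‖lam • ((‖x.1‖ ^ (p - 1)) • x.1 - (‖z.1‖ ^ (p - 1)) • z.1)‖ := h1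
        _ ≤ Ab T * ‖x.1 - z.1‖
            + lam * ((1 + (p - 1)) * (max R 0) ^ (p - 1) * ‖x.1 - z.1‖) := add_le_add h2 h3
        _ = Λ * ‖x.1 - z.1‖ := by rw [hΛdef]; ring
    -- assemble the Lipschitz bound
    have hfst : dist (F t x).1 (F t z).1 = dist x.2 z.2 := rfl
    have hcoe : ((Real.toNNReal (max 1 Λ) : NNReal) : ℝ) = max 1 Λ :=
      Real.coe_toNNReal _ (le_trans zero_le_one (le_max_left _ _))
    rw [Prod.dist_eq, hcoe]
    have hd1 : dist x.2 z.2 ≤ dist x z := by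
      rw [Prod.dist_eq]; exact le_max_right _ _
    have hd2 : dist (F t x).2 (F t z).2 ≤ Λ * dist x z := by
      rw [dist_eq_norm]
      calc ‖(F t x).2 - (F t z).2‖ ≤ Λ * ‖x.1 - z.1‖ := hsnd
        _ ≤ Λ * dist x z := by
            apply mul_le_mul_of_nonneg_left _ hΛ0
            rw [← dist_eq_norm]
            rw [Prod.dist_eq (x := x) (y := z)]
            exact le_max_left _ _
    apply max_le
    · calc dist (F t x).1 (F t z).1 = dist x.2 z.2 := hfst
        _ ≤ dist x z := hd1
        _ ≤ max 1 Λ * dist x z := le_mul_of_one_le_left dist_nonneg (le_max_left _ _)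
    · calc dist (F t x).2 (F t z).2 ≤ Λ * dist x z := hd2
        _ ≤ max 1 Λ * dist x z := by
            apply mul_le_mul_of_nonneg_right (le_max_right _ _) dist_nonneg
  -- a priori bound hypothesis
  have bdd : ∀ T, T ∈ Ico (0:ℝ) T₀ → ∃ B : ℝ, 0 ≤ B ∧ ∀ τ ∈ Icc (0:ℝ) T,
      ∀ X : ℝ → (EuclideanSpace ℝ (Fin n) × EuclideanSpace ℝ (Fin n)),
      X 0 = (Y₀, Y₁) → (∀ t ∈ Icc (0:ℝ) τ, HasDerivWithinAt X (F t (X t)) (Icc 0 τ) t) →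
      ∀ t ∈ Icc (0:ℝ) τ, ‖X t‖ ≤ B := by
    intro T hT
    obtain ⟨e0, he0def⟩ : ∃ e0 : ℝ, e0 = ‖Y₁‖ ^ 2 + Ab 0 * ‖Y₀‖ ^ 2
        + (2 * lam / (p + 1)) * (‖Y₀‖ ^ 2) ^ ((p + 1) / 2) := ⟨_, rfl⟩
    have hAb0pos : 0 < Ab 0 := hAbpos 0 hT₀pos
    have hAbTpos : 0 < Ab T := hAbpos T hT.2
    have he00 : 0 ≤ e0 := by
      rw [he0def]
      have h1 : (0:ℝ) ≤ ‖Y₁‖ ^ 2 := sq_nonneg _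
      have h2 : (0:ℝ) ≤ Ab 0 * ‖Y₀‖ ^ 2 := mul_nonneg hAb0pos.le (sq_nonneg _)
      have h3 : (0:ℝ) ≤ (2 * lam / (p + 1)) * (‖Y₀‖ ^ 2) ^ ((p + 1) / 2) := by
        apply mul_nonneg (by positivity)
        exact Real.rpow_nonneg (sq_nonneg _) _
      linarith
    obtain ⟨M, hMdef⟩ : ∃ M : ℝ, M = (Ab T / Ab 0) * e0 := ⟨_, rfl⟩
    have hM0 : 0 ≤ M := by
      rw [hMdef]
      exact mul_nonneg (div_nonneg hAbTpos.le hAb0pos.le) he00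
    refine ⟨max (Real.sqrt M) (Real.sqrt (M / Ab 0)),
      le_trans (Real.sqrt_nonneg M) (le_max_left _ _), ?_⟩
    intro τ hτ X hX0 hXd
    have hτT₀ : τ < T₀ := lt_of_le_of_lt hτ.2 hT.2
    have hmemT₀ : ∀ t : ℝ, t ∈ Icc (0:ℝ) τ → t < T₀ :=
      fun t htm => lt_of_le_of_lt htm.2 hτT₀
    have hXd' : ∀ t ∈ Icc (0:ℝ) τ, HasDerivWithinAt X
        ((X t).2, -(Ab t • (X t).1) - (lam * ‖(X t).1‖ ^ (p - 1)) • (X t).1) (Icc 0 τ) t := by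
      intro t htm
      have h := hXd t htm
      have heqF : F t (X t) = ((X t).2,
          -(Ab t • (X t).1) - (lam * ‖(X t).1‖ ^ (p - 1)) • (X t).1) := by
        simp only [hFdef]
        rw [hAFun t (hmemT₀ t htm)]
      rwa [heqF] at h
    have hEB := energy_bound hτ.1 hlam hp Ab (fun t => 2 * K * (-c) / (1 + c * t) ^ 3) X
      (fun t htm => hAbderiv t (hmemT₀ t htm))
      (fun t htm => hAbpos t (hmemT₀ t htm))
      (fun t htm => hdAbnn t (hmemT₀ t htm))
      hXd'
    intro t htm
    have hkey := hEB t htm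
    rw [hX0] at hkey
    simp only [Prod.fst, Prod.snd] at hkey
    -- now hkey has Y₀, Y₁ on the right
    have hAbtpos : 0 < Ab t := hAbpos t (hmemT₀ t htm)
    have hAbtT : Ab t ≤ Ab T := hAbmono t T htm.1 (le_trans htm.2 hτ.2) hT.2
    have hAb0t : Ab 0 ≤ Ab t := hAbmono 0 t le_rfl htm.1 (hmemT₀ t htm)
    have hu0 : (0:ℝ) ≤ ‖(X t).1‖ ^ 2 := sq_nonneg _
    have hv0 : (0:ℝ) ≤ ‖(X t).2‖ ^ 2 := sq_nonneg _
    have hr0 : (0:ℝ) ≤ (2 * lam / (p + 1)) * (‖(X t).1‖ ^ 2) ^ ((p + 1) / 2) := by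
      apply mul_nonneg (by positivity)
      exact Real.rpow_nonneg (sq_nonneg _) _
    have he0T : (‖Y₁‖ ^ 2 + Ab 0 * ‖Y₀‖ ^ 2
        + (2 * lam / (p + 1)) * (‖Y₀‖ ^ 2) ^ ((p + 1) / 2)) = e0 := he0def.symm
    rw [he0T] at hkey
    -- hkey : (v² + Ab t * u + nl) * Ab 0 ≤ e0 * Ab t
    have hMAb : M * Ab 0 = e0 * Ab T := by
      rw [hMdef]
      field_simp
    have hv2M : ‖(X t).2‖ ^ 2 ≤ M := by
      have h1 : ‖(X t).2‖ ^ 2 * Ab 0 ≤ e0 * Ab T := by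
        nlinarith [mul_nonneg (mul_nonneg hAbtpos.le hu0) hAb0pos.le,
          mul_nonneg hr0 hAb0pos.le, mul_le_mul_of_nonneg_left hAbtT he00]
      nlinarith
    have hu2M : ‖(X t).1‖ ^ 2 ≤ M / Ab 0 := by
      have h1 : (Ab 0 * ‖(X t).1‖ ^ 2) * Ab 0 ≤ e0 * Ab T := by
        nlinarith [mul_nonneg hv0 hAb0pos.le, mul_nonneg hr0 hAb0pos.le,
          mul_le_mul_of_nonneg_left hAbtT he00,
          mul_le_mul_of_nonneg_right (mul_le_mul_of_nonneg_right hAb0t hu0) hAb0pos.le]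
      rw [le_div_iff₀ hAb0pos]
      nlinarith
    -- convert to norm bounds
    have hvB : ‖(X t).2‖ ≤ Real.sqrt M := by
      rw [← Real.sqrt_sq (norm_nonneg (X t).2)]
      exact Real.sqrt_le_sqrt hv2M
    have huB : ‖(X t).1‖ ≤ Real.sqrt (M / Ab 0) := by
      rw [← Real.sqrt_sq (norm_nonneg (X t).1)]
      exact Real.sqrt_le_sqrt hu2M
    rw [Prod.norm_def]
    apply max_le
    · exact le_trans huB (le_max_right _ _)
    · exact le_trans hvB (le_max_left _ _)
  -- apply global existence
  obtain ⟨X, hX0, hXd⟩ := global_existence F T₀ hT₀pos (Y₀, Y₁) cont lip bdd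
  refine ⟨fun t => (X t).1, fun t => (X t).2, ?_, ?_, ?_, ?_, ?_⟩
  · intro t ht
    have h := (ContinuousLinearMap.fst ℝ (EuclideanSpace ℝ (Fin n))
      (EuclideanSpace ℝ (Fin n))).hasFDerivAt.comp_hasDerivWithinAt t (hXd t ht)
    simp [hFdef] at h; exact h
  · intro t ht
    have h := (ContinuousLinearMap.snd ℝ (EuclideanSpace ℝ (Fin n))
      (EuclideanSpace ℝ (Fin n))).hasFDerivAt.comp_hasDerivWithinAt t (hXd t ht)
    simp [hFdef] at h; exact h
  · intro t ht
    have h := (ContinuousLinearMap.snd ℝ (EuclideanSpace ℝ (Fin n))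
      (EuclideanSpace ℝ (Fin n))).hasFDerivAt.comp_hasDerivWithinAt t (hXd t ht)
    exact h.continuousWithinAt
  · show (X 0).1 = Y₀
    rw [hX0]
  · show (X 0).2 = Y₁
    rw [hX0]
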